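/- Let h > 0, 0 < S < T, and let g, N ∈ C¹[S,T] be positive functions satisfying |g'(t)/2 + N(t)·g(t)| ≤ C̃·g(t) and N'(t) ≤ N(t)/(T−t+h) + C̄ on [S,T], where C̃, C̄ > 0. Then for S ≤ t₁ < t₂ < t₃ ≤ T, one has g(t₂)^{1+D} ≤ g(t₃)·g(t₁)^D·e^{𝒦}, where D = (∫_{t₂}^{t₃} dt/(T−t+h)) / (∫_{t₁}^{t₂} dt/(T−t+h)) and 𝒦 = 2D(t₂−t₁)[C̃ + C̄(t₂−t₁)] + 2(t₃−t₂)[C̃ + C̄∫_{t₂}^{t₃} (T−t₂+h)/(T−t+h) dt]. -/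

import Mathlib

open Real Set intervalIntegral

set_option maxHeartbeats 1000000 in
theorem stmt_2 (h S T : ℝ) (hh : 0 < h) (hS : 0 < S) (hST : S < T)
    (g g' N N' : ℝ → ℝ) (Ctilde Cbar : ℝ)
    (hCt : 0 < Ctilde) (hCb : 0 < Cbar)
    (hgderiv : ∀ t ∈ Icc S T, HasDerivAt g (g' t) t)
    (hNderiv : ∀ t ∈ Icc S T, HasDerivAt N (N' t) t)
    (hg'cont : ContinuousOn g' (Icc S T)) (hN'cont : ContinuousOn N' (Icc S T))
    (hgpos : ∀ t ∈ Icc S T, 0 < g t) (hNpos : ∀ t ∈ Icc S T, 0 < N t)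
    (hg : ∀ t ∈ Icc S T, |g' t / 2 + N t * g t| ≤ Ctilde * g t)
    (hN : ∀ t ∈ Icc S T, N' t ≤ N t / (T - t + h) + Cbar)
    (t₁ t₂ t₃ : ℝ) (h1 : S ≤ t₁) (h12 : t₁ < t₂) (h23 : t₂ < t₃) (h3 : t₃ ≤ T) :
    g t₂ ^ (1 + (∫ t in t₂..t₃, (T - t + h)⁻¹) / (∫ t in t₁..t₂, (T - t + h)⁻¹)) ≤
      g t₃ * g t₁ ^ ((∫ t in t₂..t₃, (T - t + h)⁻¹) / (∫ t in t₁..t₂, (T - t + h)⁻¹)) *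
        Real.exp
          (2 * ((∫ t in t₂..t₃, (T - t + h)⁻¹) / (∫ t in t₁..t₂, (T - t + h)⁻¹)) * (t₂ - t₁) *
              (Ctilde + Cbar * (t₂ - t₁)) +
            2 * (t₃ - t₂) * (Ctilde + Cbar * ∫ t in t₂..t₃, (T - t₂ + h) / (T - t + h))) := by
  have ht12 : t₁ ≤ t₂ := h12.le
  have ht23 : t₂ ≤ t₃ := h23.le
  have ht1 : t₁ ∈ Icc S T := ⟨h1, by linarith⟩
  have ht2 : t₂ ∈ Icc S T := ⟨by linarith, by linarith⟩
  have ht3 : t₃ ∈ Icc S T := ⟨by linarith, h3⟩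
  have hwpos : ∀ t ∈ Icc S T, 0 < T - t + h := fun t ht => by
    have := ht.2; linarith
  have hgc : ContinuousOn g (Icc S T) := fun t ht =>
    (hgderiv t ht).continuousAt.continuousWithinAt
  have hNc : ContinuousOn N (Icc S T) := fun t ht =>
    (hNderiv t ht).continuousAt.continuousWithinAt
  have hwc : ContinuousOn (fun t => T - t + h) (Icc S T) :=
    (((continuous_const.sub continuous_id).add continuous_const)).continuousOn
  -- log derivative formula
  have hlog : ∀ a b, a ∈ Icc S T → b ∈ Icc S T → a ≤ b →
      (∫ t in a..b, g' t / g t) = Real.log (g b) - Real.log (g a) := by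
    intro a b ha hb hab
    have hsub : Icc a b ⊆ Icc S T := Icc_subset_Icc ha.1 hb.2
    apply intervalIntegral.integral_eq_sub_of_hasDerivAt
    · intro t ht
      rw [uIcc_of_le hab] at ht
      have htST := hsub ht
      exact (hgderiv t htST).log (hgpos t htST).ne'
    · apply ContinuousOn.intervalIntegrable
      rw [uIcc_of_le hab]
      exact (hg'cont.mono hsub).div (hgc.mono hsub)
        (fun t ht => (hgpos t (hsub ht)).ne')
  -- almost monotonicity of φ(t) = N t * (T - t + h)
  have hphi : ∀ a b, a ∈ Icc S T → b ∈ Icc S T → a ≤ b →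
      N b * (T - b + h) ≤ N a * (T - a + h) + Cbar * (b - a) * (T - a + h) := by
    intro a b ha hb hab
    have hsub : Icc a b ⊆ Icc S T := Icc_subset_Icc ha.1 hb.2
    have hphic : ContinuousOn (fun t => N' t * (T - t + h) - N t) (Icc a b) :=
      (((hN'cont.mono hsub).mul (hwc.mono hsub)).sub (hNc.mono hsub))
    have key : (∫ t in a..b, (N' t * (T - t + h) - N t))
        = N b * (T - b + h) - N a * (T - a + h) := by
      apply intervalIntegral.integral_eq_sub_of_hasDerivAt
      · intro t ht
        rw [uIcc_of_le hab] at ht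
        have htST := hsub ht
        have hd := (hNderiv t htST).mul (((hasDerivAt_id t).const_sub T).add_const h)
        convert hd using 1
        · rfl
        · rfl
        simp only [id_eq]
        ring
      · apply ContinuousOn.intervalIntegrable
        rw [uIcc_of_le hab]; exact hphic
    have hmono : (∫ t in a..b, (N' t * (T - t + h) - N t))
        ≤ ∫ _t in a..b, Cbar * (T - a + h) := by
      apply intervalIntegral.integral_mono_on hab
      · apply ContinuousOn.intervalIntegrable; rw [uIcc_of_le hab]; exact hphic
      · exact intervalIntegrable_const
      · intro t ht
        have htST := hsub ht
        have hw := hwpos t htST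
        have hN' := hN t htST
        have hmul : N' t * (T - t + h) ≤ (N t / (T - t + h) + Cbar) * (T - t + h) :=
          mul_le_mul_of_nonneg_right hN' hw.le
        rw [add_mul, div_mul_cancel₀ _ hw.ne'] at hmul
        have hTle : T - t + h ≤ T - a + h := by have := ht.1; linarith
        have := mul_le_mul_of_nonneg_left hTle hCb.le
        linarith
    rw [key, intervalIntegral.integral_const, smul_eq_mul] at hmono
    have hbridge : (b - a) * (Cbar * (T - a + h)) = Cbar * (b - a) * (T - a + h) := by ring
    linarith
  set I₁ : ℝ := ∫ t in t₁..t₂, (T - t + h)⁻¹ with hI₁def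
  set I₂ : ℝ := ∫ t in t₂..t₃, (T - t + h)⁻¹ with hI₂def
  set J : ℝ := ∫ t in t₂..t₃, (T - t₂ + h) / (T - t + h) with hJdef
  have hwinvc : ContinuousOn (fun t => (T - t + h)⁻¹) (Icc S T) :=
    hwc.inv₀ (fun t ht => (hwpos t ht).ne')
  have hsub12 : Icc t₁ t₂ ⊆ Icc S T := Icc_subset_Icc ht1.1 ht2.2
  have hsub23 : Icc t₂ t₃ ⊆ Icc S T := Icc_subset_Icc ht2.1 ht3.2
  have hint_w12 : IntervalIntegrable (fun t => (T - t + h)⁻¹) MeasureTheory.volume t₁ t₂ := by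
    apply ContinuousOn.intervalIntegrable
    rw [uIcc_of_le ht12]; exact hwinvc.mono hsub12
  have hint_w23 : IntervalIntegrable (fun t => (T - t + h)⁻¹) MeasureTheory.volume t₂ t₃ := by
    apply ContinuousOn.intervalIntegrable
    rw [uIcc_of_le ht23]; exact hwinvc.mono hsub23
  have hint_N12 : IntervalIntegrable N MeasureTheory.volume t₁ t₂ := by
    apply ContinuousOn.intervalIntegrable
    rw [uIcc_of_le ht12]; exact hNc.mono hsub12
  have hint_N23 : IntervalIntegrable N MeasureTheory.volume t₂ t₃ := by
    apply ContinuousOn.intervalIntegrable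
    rw [uIcc_of_le ht23]; exact hNc.mono hsub23
  have hint_q12 : IntervalIntegrable (fun t => g' t / g t) MeasureTheory.volume t₁ t₂ := by
    apply ContinuousOn.intervalIntegrable
    rw [uIcc_of_le ht12]
    exact ((hg'cont.mono hsub12).div (hgc.mono hsub12)
      (fun t ht => (hgpos t (hsub12 ht)).ne'))
  have hint_q23 : IntervalIntegrable (fun t => g' t / g t) MeasureTheory.volume t₂ t₃ := by
    apply ContinuousOn.intervalIntegrable
    rw [uIcc_of_le ht23]
    exact ((hg'cont.mono hsub23).div (hgc.mono hsub23)
      (fun t ht => (hgpos t (hsub23 ht)).ne'))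
  have hint_r23 : IntervalIntegrable (fun t => (T - t₂ + h) / (T - t + h))
      MeasureTheory.volume t₂ t₃ := by
    apply ContinuousOn.intervalIntegrable
    rw [uIcc_of_le ht23]
    exact (continuousOn_const.div (hwc.mono hsub23)
      (fun t ht => (hwpos t (hsub23 ht)).ne'))
  have hI₁pos : 0 < I₁ := by
    apply intervalIntegral.intervalIntegral_pos_of_pos_on hint_w12 _ h12
    intro t ht
    exact inv_pos.mpr (hwpos t ⟨by linarith [ht.1], by linarith [ht.2]⟩)
  have hI₂pos : 0 < I₂ := by
    apply intervalIntegral.intervalIntegral_pos_of_pos_on hint_w23 _ h23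
    intro t ht
    exact inv_pos.mpr (hwpos t ⟨by linarith [ht.1], by linarith [ht.2]⟩)
  set D : ℝ := I₂ / I₁ with hDdef
  have hDpos : 0 < D := div_pos hI₂pos hI₁pos
  have hDI : D * I₁ = I₂ := div_mul_cancel₀ _ hI₁pos.ne'
  set φ₂ : ℝ := N t₂ * (T - t₂ + h) with hφ₂def
  -- pointwise bounds on q = g'/g
  have hq : ∀ t ∈ Icc S T,
      -2 * N t - 2 * Ctilde ≤ g' t / g t ∧ g' t / g t ≤ -2 * N t + 2 * Ctilde := by
    intro t ht
    have hgt := hgpos t ht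
    have habs := abs_le.mp (hg t ht)
    constructor
    · rw [le_div_iff₀ hgt]; nlinarith [habs.1]
    · rw [div_le_iff₀ hgt]; nlinarith [habs.2]
  -- integral bounds for q
  have hq12 : (∫ t in t₁..t₂, g' t / g t)
      ≤ 2 * Ctilde * (t₂ - t₁) - 2 * ∫ t in t₁..t₂, N t := by
    have hmono := intervalIntegral.integral_mono_on ht12 hint_q12
      ((hint_N12.const_mul (-2)).add intervalIntegrable_const)
      (fun t ht => (hq t (hsub12 ht)).2)
    rw [intervalIntegral.integral_add (hint_N12.const_mul (-2)) intervalIntegrable_const,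
      intervalIntegral.integral_const_mul, intervalIntegral.integral_const, smul_eq_mul] at hmono
    linarith
  have hq23 : -(2 * Ctilde * (t₃ - t₂)) - (2 * ∫ t in t₂..t₃, N t)
      ≤ ∫ t in t₂..t₃, g' t / g t := by
    have hmono := intervalIntegral.integral_mono_on ht23
      ((hint_N23.const_mul (-2)).sub intervalIntegrable_const) hint_q23
      (fun t ht => (hq t (hsub23 ht)).1)
    rw [intervalIntegral.integral_sub (hint_N23.const_mul (-2)) intervalIntegrable_const,
      intervalIntegral.integral_const_mul, intervalIntegral.integral_const, smul_eq_mul] at hmono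
    linarith
  -- bound A : ∫_{t₂}^{t₃} N ≤ φ₂ I₂ + C̄ (t₃-t₂) J
  have hA : (∫ t in t₂..t₃, N t) ≤ φ₂ * I₂ + Cbar * (t₃ - t₂) * J := by
    have hint_rhs : IntervalIntegrable
        (fun t => φ₂ * (T - t + h)⁻¹ + Cbar * (t₃ - t₂) * ((T - t₂ + h) / (T - t + h)))
        MeasureTheory.volume t₂ t₃ :=
      (hint_w23.const_mul _).add (hint_r23.const_mul _)
    have hpt : ∀ t ∈ Icc t₂ t₃,
        N t ≤ φ₂ * (T - t + h)⁻¹ + Cbar * (t₃ - t₂) * ((T - t₂ + h) / (T - t + h)) := by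
      intro t ht
      have htST := hsub23 ht
      have hw := hwpos t htST
      have hw2 := hwpos t₂ ht2
      have hp := hphi t₂ t ht2 htST ht.1
      have h1 : N t * (T - t + h) ≤ φ₂ + Cbar * (t₃ - t₂) * (T - t₂ + h) := by
        have hx : 0 ≤ Cbar * (t₃ - t) * (T - t₂ + h) :=
          mul_nonneg (mul_nonneg hCb.le (by linarith [ht.2])) hw2.le
        rw [hφ₂def]
        nlinarith
      have h3 : φ₂ * (T - t + h)⁻¹ + Cbar * (t₃ - t₂) * ((T - t₂ + h) / (T - t + h))
          = (φ₂ + Cbar * (t₃ - t₂) * (T - t₂ + h)) / (T - t + h) := by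
        field_simp
      rw [h3, le_div_iff₀ hw]
      exact h1
    have hmono := intervalIntegral.integral_mono_on ht23 hint_N23 hint_rhs hpt
    calc (∫ t in t₂..t₃, N t) ≤ _ := hmono
      _ = φ₂ * I₂ + Cbar * (t₃ - t₂) * J := by
        rw [intervalIntegral.integral_add (hint_w23.const_mul _) (hint_r23.const_mul _),
          intervalIntegral.integral_const_mul, intervalIntegral.integral_const_mul]
  -- bound B : φ₂ I₁ ≤ ∫_{t₁}^{t₂} N + C̄ (t₂ - t₁)^2
  have hB : φ₂ * I₁ ≤ (∫ t in t₁..t₂, N t) + Cbar * (t₂ - t₁) ^ 2 := by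
    have hpt : ∀ t ∈ Icc t₁ t₂,
        φ₂ * (T - t + h)⁻¹ ≤ N t + Cbar * (t₂ - t₁) := by
      intro t ht
      have htST := hsub12 ht
      have hw := hwpos t htST
      have hp := hphi t t₂ htST ht2 ht.2
      have h1 : φ₂ ≤ (N t + Cbar * (t₂ - t₁)) * (T - t + h) := by
        have hx : 0 ≤ Cbar * (t - t₁) * (T - t + h) :=
          mul_nonneg (mul_nonneg hCb.le (by linarith [ht.1])) hw.le
        rw [hφ₂def]
        nlinarith
      rw [← div_eq_mul_inv, div_le_iff₀ hw]
      exact h1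
    have hmono := intervalIntegral.integral_mono_on ht12 (hint_w12.const_mul φ₂)
      ((hint_N12.add intervalIntegrable_const) :
        IntervalIntegrable (fun t => N t + Cbar * (t₂ - t₁)) MeasureTheory.volume t₁ t₂) hpt
    rw [intervalIntegral.integral_const_mul,
      intervalIntegral.integral_add hint_N12 intervalIntegrable_const,
      intervalIntegral.integral_const, smul_eq_mul] at hmono
    have hbridge : (t₂ - t₁) * (Cbar * (t₂ - t₁)) = Cbar * (t₂ - t₁) ^ 2 := by ring
    linarith
  -- combine in log form
  have hlog12 := hlog t₁ t₂ ht1 ht2 ht12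
  have hlog23 := hlog t₂ t₃ ht2 ht3 ht23
  have hg1 := hgpos t₁ ht1
  have hg2 := hgpos t₂ ht2
  have hg3 := hgpos t₃ ht3
  have hDB : D * (φ₂ * I₁) ≤ D * ((∫ t in t₁..t₂, N t) + Cbar * (t₂ - t₁) ^ 2) :=
    mul_le_mul_of_nonneg_left hB hDpos.le
  have e1 : Real.log (g t₂) - Real.log (g t₁)
      ≤ 2 * Ctilde * (t₂ - t₁) - 2 * ∫ t in t₁..t₂, N t := by
    rw [← hlog12]; exact hq12
  have e3 : D * (Real.log (g t₂) - Real.log (g t₁))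
      ≤ D * (2 * Ctilde * (t₂ - t₁) - 2 * ∫ t in t₁..t₂, N t) :=
    mul_le_mul_of_nonneg_left e1 hDpos.le
  have e2 : -(2 * Ctilde * (t₃ - t₂)) - (2 * ∫ t in t₂..t₃, N t)
      ≤ Real.log (g t₃) - Real.log (g t₂) := by
    rw [← hlog23]; exact hq23
  have hφI : φ₂ * I₂ = D * (φ₂ * I₁) := by rw [← hDI]; ring
  have hmain : (1 + D) * Real.log (g t₂) ≤ Real.log (g t₃) + D * Real.log (g t₁) +
      (2 * D * (t₂ - t₁) * (Ctilde + Cbar * (t₂ - t₁)) +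
        2 * (t₃ - t₂) * (Ctilde + Cbar * J)) := by
    linarith [hA, hDB, e2, e3, hφI]
  -- exponentiate
  rw [Real.rpow_def_of_pos hg2, Real.rpow_def_of_pos hg1,
    ← Real.exp_log hg3, ← Real.exp_add, ← Real.exp_add]
  apply Real.exp_le_exp.mpr
  calc Real.log (g t₂) * (1 + D) = (1 + D) * Real.log (g t₂) := by ring
    _ ≤ _ := hmain
    _ = Real.log (g t₃) + Real.log (g t₁) * D +
        (2 * D * (t₂ - t₁) * (Ctilde + Cbar * (t₂ - t₁)) +
          2 * (t₃ - t₂) * (Ctilde + Cbar * J)) := by ring
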